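/- Fix n ≥ 3 and let eval map a word w : List (Fin n × Bool) to the ordered product in Equiv.Perm (Option (Fin n × ℕ)) of the shifts s_i (for letters (i, true)) and their inverses s_i⁻¹ (for letters (i, false)). If eval w is not the identity permutation, then there exist lists x and y with w = x ++ y such that (eval (y ++ x)) none ≠ none, i.e. some cyclic permutation of w moves the center of the star. -/

import Mathlib

/-- Modular successor on `Fin n`. -/
def fsucc {n : ℕ} (i : Fin n) : Fin n :=
  ⟨(i.val + 1) % n, Nat.mod_lt _ (Nat.lt_of_le_of_lt (Nat.zero_le _) i.isLt)⟩

lemma fsucc_ne {n : ℕ} (hn : 2 ≤ n) (i : Fin n) : fsucc i ≠ i := by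
  rcases Nat.lt_or_ge (i.val + 1) n with h | h
  · intro he
    have : (i.val + 1) % n = i.val := congrArg Fin.val he
    rw [Nat.mod_eq_of_lt h] at this
    omega
  · intro he
    have hi := i.isLt
    have hn1 : i.val + 1 = n := by omega
    have : (i.val + 1) % n = i.val := congrArg Fin.val he
    rw [hn1, Nat.mod_self] at this
    omega

/-- The underlying function of the shift `s_i` on the star `*^n` with center `none`. -/
def shiftFun {n : ℕ} (i : Fin n) : Option (Fin n × ℕ) → Option (Fin n × ℕ)
  | none => some (fsucc i, 0)
  | some (l, k) =>
      if l = i then (match k with | 0 => none | Nat.succ k' => some (i, k'))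
      else if l = fsucc i then some (fsucc i, k + 1)
      else some (l, k)

/-- The inverse of `shiftFun i`. -/
def shiftInvFun {n : ℕ} (i : Fin n) : Option (Fin n × ℕ) → Option (Fin n × ℕ)
  | none => some (i, 0)
  | some (l, k) =>
      if l = i then some (i, k + 1)
      else if l = fsucc i then (match k with | 0 => none | Nat.succ k' => some (fsucc i, k'))
      else some (l, k)

/-- The shift `s_i`, as a permutation of the star `*^n`. -/
def shift {n : ℕ} (hn : 2 ≤ n) (i : Fin n) : Equiv.Perm (Option (Fin n × ℕ)) where
  toFun := shiftFun i
  invFun := shiftInvFun i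
  left_inv := by
    have hs := fsucc_ne hn i
    rintro (_ | ⟨l, k⟩)
    · simp [shiftFun, shiftInvFun, hs]
    · by_cases hl : l = i
      · subst hl
        cases k with
        | zero => simp [shiftFun, shiftInvFun]
        | succ k' => simp [shiftFun, shiftInvFun]
      · by_cases hl2 : l = fsucc i
        · subst hl2; simp [shiftFun, shiftInvFun, hs]
        · simp [shiftFun, shiftInvFun, hl, hl2]
  right_inv := by
    have hs := fsucc_ne hn i
    rintro (_ | ⟨l, k⟩)
    · simp [shiftFun, shiftInvFun, hs]
    · by_cases hl : l = i
      · subst hl; simp [shiftFun, shiftInvFun]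
      · by_cases hl2 : l = fsucc i
        · subst hl2
          cases k with
          | zero => simp [shiftFun, shiftInvFun, hs]
          | succ k' => simp [shiftFun, shiftInvFun, hs]
        · simp [shiftFun, shiftInvFun, hl, hl2]

/-- Evaluation of a signed word over the alphabet `A` in the group `G`. -/
def evalWord {G A : Type*} [Group G] (f : A → G) (w : List (A × Bool)) : G :=
  (w.map fun p => if p.2 then f p.1 else (f p.1)⁻¹).prod
namespace StarCenterAux

variable {n : ℕ}

/-- The permutation associated to a single signed letter. -/
def lp (hn2 : 2 ≤ n) (p : Fin n × Bool) : Equiv.Perm (Option (Fin n × ℕ)) :=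
  if p.2 then shift hn2 p.1 else (shift hn2 p.1)⁻¹

/-- Evaluation of a word, abbreviation. -/
def Ew (hn2 : 2 ≤ n) (w : List (Fin n × Bool)) : Equiv.Perm (Option (Fin n × ℕ)) :=
  evalWord (fun i => shift hn2 i) w

lemma Ew_nil (hn2 : 2 ≤ n) : Ew hn2 [] = 1 := rfl

lemma Ew_cons (hn2 : 2 ≤ n) (p : Fin n × Bool) (w : List (Fin n × Bool)) :
    Ew hn2 (p :: w) = lp hn2 p * Ew hn2 w := by
  simp [Ew, evalWord, lp]

lemma Ew_append (hn2 : 2 ≤ n) (x y : List (Fin n × Bool)) :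
    Ew hn2 (x ++ y) = Ew hn2 x * Ew hn2 y := by
  simp [Ew, evalWord]

lemma lp_true (hn2 : 2 ≤ n) (i : Fin n) (v : Option (Fin n × ℕ)) :
    lp hn2 (i, true) v = shiftFun i v := rfl

lemma lp_false (hn2 : 2 ≤ n) (i : Fin n) (v : Option (Fin n × ℕ)) :
    lp hn2 (i, false) v = shiftInvFun i v := rfl

lemma lp_inv (hn2 : 2 ≤ n) (p : Fin n × Bool) :
    (lp hn2 p)⁻¹ = lp hn2 (p.1, !p.2) := by
  rcases p with ⟨i, b⟩
  cases b <;> simp [lp]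

end StarCenterAux
namespace StarCenterAux

variable {n : ℕ}

/-- Depth change of a letter on ray `L`. -/
def eta (p : Fin n × Bool) (L : Fin n) : ℤ :=
  if p.2 then (if L = p.1 then -1 else if L = fsucc p.1 then 1 else 0)
  else (if L = p.1 then 1 else if L = fsucc p.1 then -1 else 0)

/-- Depth of a point (center = -1). -/
def dep : Option (Fin n × ℕ) → ℤ
  | none => -1
  | some q => q.2

lemma lp_step (hn2 : 2 ≤ n) (p : Fin n × Bool) (L : Fin n) (k : ℕ)
    (hne : lp hn2 p (some (L, k)) ≠ none) :
    ∃ k' : ℕ, lp hn2 p (some (L, k)) = some (L, k') ∧ (k' : ℤ) = (k : ℤ) + eta p L := by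
  obtain ⟨i, b⟩ := p
  have hfs := fsucc_ne hn2 i
  cases b
  · rw [lp_false] at hne ⊢
    by_cases h1 : L = i
    · subst h1
      refine ⟨k + 1, ?_, ?_⟩ <;> simp [shiftInvFun, eta] <;> push_cast <;> ring
    · by_cases h2 : L = fsucc i
      · subst h2
        cases k with
        | zero => simp [shiftInvFun, hfs] at hne
        | succ k' =>
          refine ⟨k', ?_, ?_⟩
          · simp [shiftInvFun, hfs]
          · simp [eta, hfs, Ne.symm hfs] <;> push_cast <;> ring
      · refine ⟨k, ?_, ?_⟩
        · simp [shiftInvFun, h1, h2]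
        · simp [eta, h1, h2]
  · rw [lp_true] at hne ⊢
    by_cases h1 : L = i
    · subst h1
      cases k with
      | zero => simp [shiftFun] at hne
      | succ k' =>
        refine ⟨k', ?_, ?_⟩
        · simp [shiftFun]
        · simp [eta] <;> push_cast <;> ring
    · by_cases h2 : L = fsucc i
      · subst h2
        refine ⟨k + 1, ?_, ?_⟩
        · simp [shiftFun, hfs, Ne.symm hfs]
        · simp [eta, hfs, Ne.symm hfs] <;> push_cast <;> ring
      · refine ⟨k, ?_, ?_⟩
        · simp [shiftFun, h1, h2]
        · simp [eta, h1, h2]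

end StarCenterAux
namespace StarCenterAux

variable {n : ℕ}

/-- suffix evaluation. -/
def Ap (hn2 : 2 ≤ n) (w : List (Fin n × Bool)) (r : ℕ) : Equiv.Perm (Option (Fin n × ℕ)) :=
  Ew hn2 (w.drop r)

/-- prefix evaluation. -/
def Tk (hn2 : 2 ≤ n) (w : List (Fin n × Bool)) (r : ℕ) : Equiv.Perm (Option (Fin n × ℕ)) :=
  Ew hn2 (w.take r)

lemma Ap_zero (hn2 : 2 ≤ n) (w : List (Fin n × Bool)) : Ap hn2 w 0 = Ew hn2 w := rfl

lemma Ap_len (hn2 : 2 ≤ n) (w : List (Fin n × Bool)) : Ap hn2 w w.length = 1 := by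
  simp [Ap, Ew, evalWord]

lemma Tk_mul_Ap (hn2 : 2 ≤ n) (w : List (Fin n × Bool)) (r : ℕ) :
    Tk hn2 w r * Ap hn2 w r = Ew hn2 w := by
  rw [Tk, Ap, ← Ew_append, List.take_append_drop]

lemma Ap_succ (hn2 : 2 ≤ n) (w : List (Fin n × Bool)) (d : Fin n × Bool) (r : ℕ)
    (hr : r < w.length) :
    Ap hn2 w r = lp hn2 (w.getD r d) * Ap hn2 w (r + 1) := by
  rw [Ap, List.drop_eq_getElem_cons hr, Ew_cons, List.getD_eq_getElem _ _ hr, Ap]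

/-- The bi-infinite trajectory of `v` under the periodic extension of `w`. -/
def uT (hn2 : 2 ≤ n) (w : List (Fin n × Bool)) (v : Option (Fin n × ℕ)) (j : ℤ) :
    Option (Fin n × ℕ) :=
  Ap hn2 w (j % (w.length : ℤ)).toNat ((Ew hn2 w ^ (-(j / (w.length : ℤ)))) v)

lemma divmod_char (m : ℕ) (hm : 0 < m) (j q r : ℤ) (hj : j = q * m + r) (h0 : 0 ≤ r)
    (h1 : r < m) : j / (m : ℤ) = q ∧ j % (m : ℤ) = r := by
  have hmz : (0 : ℤ) < (m : ℤ) := by exact_mod_cast hm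
  rw [Int.ediv_emod_unique hmz]
  exact ⟨by rw [hj]; ring, h0, h1⟩

lemma uT_eval (hn2 : 2 ≤ n) (w : List (Fin n × Bool)) (hm : 0 < w.length)
    (v : Option (Fin n × ℕ)) (q r : ℤ) (h0 : 0 ≤ r) (h1 : r < (w.length : ℤ)) :
    uT hn2 w v (q * w.length + r) =
      Ap hn2 w r.toNat ((Ew hn2 w ^ (-q)) v) := by
  obtain ⟨hd, hr⟩ := divmod_char w.length hm (q * w.length + r) q r rfl h0 h1
  rw [uT, hd, hr]

end StarCenterAux
namespace StarCenterAux

variable {n : ℕ}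

lemma uT_zero (hn2 : 2 ≤ n) (w : List (Fin n × Bool)) (hm : 0 < w.length)
    (v : Option (Fin n × ℕ)) : uT hn2 w v 0 = Ew hn2 w v := by
  have h := uT_eval hn2 w hm v 0 0 le_rfl (by exact_mod_cast hm)
  simp only [zero_mul, zero_add, neg_zero, zpow_zero, Int.toNat_zero] at h
  rw [h, Ap_zero]
  simp

lemma uT_len (hn2 : 2 ≤ n) (w : List (Fin n × Bool)) (hm : 0 < w.length)
    (v : Option (Fin n × ℕ)) : uT hn2 w v (w.length : ℤ) = v := by
  have h := uT_eval hn2 w hm v 1 0 le_rfl (by exact_mod_cast hm)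
  simp only [one_mul, add_zero, Int.toNat_zero] at h
  rw [h, Ap_zero, zpow_neg, zpow_one]
  simp

lemma uT_rec (hn2 : 2 ≤ n) (w : List (Fin n × Bool)) (hm : 0 < w.length)
    (d : Fin n × Bool) (v : Option (Fin n × ℕ)) (j : ℤ) :
    uT hn2 w v (j - 1) =
      lp hn2 (w.getD ((j - 1) % (w.length : ℤ)).toNat d) (uT hn2 w v j) := by
  have hmz : (0 : ℤ) < (w.length : ℤ) := by exact_mod_cast hm
  have hq0 := Int.mul_ediv_add_emod j (w.length : ℤ)
  have h0 : 0 ≤ j % (w.length : ℤ) := Int.emod_nonneg j (by omega)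
  have h1 : j % (w.length : ℤ) < w.length := Int.emod_lt_of_pos j hmz
  set m : ℕ := w.length with hmdef
  set q : ℤ := j / (m : ℤ) with hqdef
  set r : ℤ := j % (m : ℤ) with hrdef
  have hq : j = q * (m : ℤ) + r := by linarith
  have hjr : uT hn2 w v j = Ap hn2 w r.toNat ((Ew hn2 w ^ (-q)) v) := by
    rw [hq, uT_eval hn2 w hm v q r h0 h1]
  by_cases hr0 : r = 0
  · have e1 : j - 1 = (q - 1) * (m : ℤ) + ((m : ℤ) - 1) := by rw [hq, hr0]; ring
    have e2 : (j - 1) % (m : ℤ) = (m : ℤ) - 1 :=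
      (divmod_char m hm (j - 1) (q - 1) ((m : ℤ) - 1) e1 (by omega) (by omega)).2
    have e3 : ((m : ℤ) - 1).toNat = m - 1 := by omega
    rw [e2, e3, e1, uT_eval hn2 w hm v (q - 1) ((m : ℤ) - 1) (by omega) (by omega), e3, hjr,
      Ap_succ hn2 w d (m - 1) (by omega)]
    have e4 : m - 1 + 1 = m := by omega
    rw [e4, Ap_len, hr0, Int.toNat_zero, Ap_zero]
    have e5 : -(q - 1) = 1 + -q := by ring
    rw [e5, zpow_add, zpow_one]
    simp [Equiv.Perm.mul_apply]
  · have e1 : j - 1 = q * (m : ℤ) + (r - 1) := by rw [hq]; ring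
    have e2 : (j - 1) % (m : ℤ) = r - 1 :=
      (divmod_char m hm (j - 1) q (r - 1) e1 (by omega) (by omega)).2
    rw [e2, e1, uT_eval hn2 w hm v q (r - 1) (by omega) (by omega), hjr,
      Ap_succ hn2 w d (r - 1).toNat (by omega)]
    have e4 : (r - 1).toNat + 1 = r.toNat := by omega
    rw [e4]
    simp [Equiv.Perm.mul_apply]

lemma uT_sub (hn2 : 2 ≤ n) (w : List (Fin n × Bool)) (hm : 0 < w.length)
    (v : Option (Fin n × ℕ)) (j : ℤ) :
    uT hn2 w v (j - (w.length : ℤ)) =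
      (Ap hn2 w (j % (w.length : ℤ)).toNat * Tk hn2 w (j % (w.length : ℤ)).toNat)
        (uT hn2 w v j) := by
  have hmz : (0 : ℤ) < (w.length : ℤ) := by exact_mod_cast hm
  have hq0 := Int.mul_ediv_add_emod j (w.length : ℤ)
  have h0 : 0 ≤ j % (w.length : ℤ) := Int.emod_nonneg j (by omega)
  have h1 : j % (w.length : ℤ) < w.length := Int.emod_lt_of_pos j hmz
  set m : ℕ := w.length with hmdef
  set q : ℤ := j / (m : ℤ) with hqdef
  set r : ℤ := j % (m : ℤ) with hrdef
  have hq : j = q * (m : ℤ) + r := by linarith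
  have hjr : uT hn2 w v j = Ap hn2 w r.toNat ((Ew hn2 w ^ (-q)) v) := by
    rw [hq, uT_eval hn2 w hm v q r h0 h1]
  have e1 : j - (m : ℤ) = (q - 1) * (m : ℤ) + r := by rw [hq]; ring
  rw [e1, uT_eval hn2 w hm v (q - 1) r h0 h1, hjr]
  have e5 : -(q - 1) = 1 + -q := by ring
  rw [e5, zpow_add, zpow_one]
  have hTA : Tk hn2 w r.toNat (Ap hn2 w r.toNat ((Ew hn2 w ^ (-q)) v)) =
      Ew hn2 w ((Ew hn2 w ^ (-q)) v) := by
    rw [← Equiv.Perm.mul_apply, Tk_mul_Ap]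
  simp only [Equiv.Perm.mul_apply, hTA]

end StarCenterAux
namespace StarCenterAux

variable {n : ℕ}

lemma perm_apply_inv_self {α : Type*} (e : Equiv.Perm α) (x : α) : e (e⁻¹ x) = x :=
  Equiv.apply_symm_apply e x

lemma gfix (hn2 : 2 ≤ n) (w : List (Fin n × Bool)) (hm : 0 < w.length)
    (hrot : ∀ r : ℕ,
      (Ap hn2 w r * Tk hn2 w r) (none : Option (Fin n × ℕ)) = none)
    (v₀ : Option (Fin n × ℕ)) : Ew hn2 w v₀ = v₀ := by
  set m : ℕ := w.length with hmdef
  set g : Equiv.Perm (Option (Fin n × ℕ)) := Ew hn2 w with hgdef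
  by_cases hc : ∃ j : ℤ, uT hn2 w v₀ j = none
  · -- the trajectory hits the center: use the rotation hypothesis directly
    obtain ⟨j, hj⟩ := hc
    have hmz : (0 : ℤ) < (m : ℤ) := by exact_mod_cast hm
    have hq0 := Int.mul_ediv_add_emod j (m : ℤ)
    have h0 : 0 ≤ j % (m : ℤ) := Int.emod_nonneg j (by omega)
    have h1 : j % (m : ℤ) < m := Int.emod_lt_of_pos j hmz
    set q : ℤ := j / (m : ℤ) with hqdef
    set r : ℤ := j % (m : ℤ) with hrdef
    have hq : j = q * (m : ℤ) + r := by linarith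
    have hx : Ap hn2 w r.toNat ((g ^ (-q)) v₀) = none := by
      rw [← uT_eval hn2 w hm v₀ q r h0 h1, ← hq]; exact hj
    have h1' : (g ^ (-q)) v₀ = (Ap hn2 w r.toNat)⁻¹ none := by
      rw [← hx]; simp
    have hgx : g ((Ap hn2 w r.toNat)⁻¹ none) = Tk hn2 w r.toNat none := by
      rw [hgdef, ← Tk_mul_Ap hn2 w r.toNat, Equiv.Perm.mul_apply,
        perm_apply_inv_self]
    have h2 : g ((Ap hn2 w r.toNat)⁻¹ none) = (Ap hn2 w r.toNat)⁻¹ none := by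
      apply (Ap hn2 w r.toNat).injective
      rw [hgx, perm_apply_inv_self, ← Equiv.Perm.mul_apply]
      exact hrot r.toNat
    have hv : v₀ = (g ^ q) ((Ap hn2 w r.toNat)⁻¹ none) := by
      rw [← h1', ← Equiv.Perm.mul_apply, ← zpow_add]
      simp
    have hcomm : g * g ^ q = g ^ q * g := ((Commute.refl g).zpow_right q).eq
    calc g v₀ = (g * g ^ q) ((Ap hn2 w r.toNat)⁻¹ none) := by
          rw [hv, Equiv.Perm.mul_apply]
      _ = (g ^ q) (g ((Ap hn2 w r.toNat)⁻¹ none)) := by rw [hcomm, Equiv.Perm.mul_apply]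
      _ = (g ^ q) ((Ap hn2 w r.toNat)⁻¹ none) := by rw [h2]
      _ = v₀ := hv.symm
  · -- the trajectory never hits the center: it stays on a single ray
    push_neg at hc
    have hvm : uT hn2 w v₀ (m : ℤ) = v₀ := uT_len hn2 w hm v₀
    obtain ⟨⟨L, k₀⟩, hv0⟩ : ∃ p, v₀ = some p := by
      cases hval : v₀ with
      | none => exact absurd (hvm.trans hval) (hc (m : ℤ))
      | some p => exact ⟨p, rfl⟩
    have hnpos : 0 < n := by omega
    set pd : Fin n × Bool := (⟨0, hnpos⟩, true) with hpd
    -- the trajectory stays on ray L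
    have hRay2 : ∀ N : ℕ, (∃ k, uT hn2 w v₀ ((m : ℤ) - N) = some (L, k)) ∧
        (∃ k, uT hn2 w v₀ ((m : ℤ) + N) = some (L, k)) := by
      intro N
      induction N with
      | zero => simp only [Nat.cast_zero, sub_zero, add_zero]
                exact ⟨⟨k₀, by rw [hvm, hv0]⟩, ⟨k₀, by rw [hvm, hv0]⟩⟩
      | succ N ih =>
        constructor
        · obtain ⟨k, hk⟩ := ih.1
          have hrec := uT_rec hn2 w hm pd v₀ ((m : ℤ) - N)
          rw [hk] at hrec
          have hne : lp hn2 (w.getD (((m : ℤ) - N - 1) % (m : ℤ)).toNat pd)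
              (some (L, k)) ≠ none := by
            rw [← hrec]; exact hc _
          obtain ⟨k', hk', -⟩ := lp_step hn2 _ L k hne
          refine ⟨k', ?_⟩
          have he : (m : ℤ) - (N + 1 : ℕ) = (m : ℤ) - N - 1 := by push_cast; ring
          rw [he, hrec, hk']
        · obtain ⟨k, hk⟩ := ih.2
          have hrec := uT_rec hn2 w hm pd v₀ ((m : ℤ) + N + 1)
          have he : (m : ℤ) + N + 1 - 1 = (m : ℤ) + N := by ring
          rw [he, hk] at hrec
          have huj : uT hn2 w v₀ ((m : ℤ) + N + 1) =
              lp hn2 ((w.getD (((m : ℤ) + N) % (m : ℤ)).toNat pd).1,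
                !(w.getD (((m : ℤ) + N) % (m : ℤ)).toNat pd).2) (some (L, k)) := by
            rw [← lp_inv]
            exact (Equiv.eq_symm_apply _).mpr hrec.symm
          have hne : lp hn2 ((w.getD (((m : ℤ) + N) % (m : ℤ)).toNat pd).1,
              !(w.getD (((m : ℤ) + N) % (m : ℤ)).toNat pd).2) (some (L, k)) ≠ none := by
            rw [← huj]; exact hc _
          obtain ⟨k', hk', -⟩ := lp_step hn2 _ L k hne
          refine ⟨k', ?_⟩
          have he2 : (m : ℤ) + (N + 1 : ℕ) = (m : ℤ) + N + 1 := by push_cast; ring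
          rw [he2, huj, hk']
    have hRay : ∀ j : ℤ, ∃ k, uT hn2 w v₀ j = some (L, k) := by
      intro j
      rcases le_or_gt j (m : ℤ) with h | h
      · have he : (m : ℤ) - (((m : ℤ) - j).toNat : ℤ) = j := by omega
        rw [← he]; exact (hRay2 ((m : ℤ) - j).toNat).1
      · have he : (m : ℤ) + ((j - (m : ℤ)).toNat : ℤ) = j := by omega
        rw [← he]; exact (hRay2 (j - (m : ℤ)).toNat).2
    have hpos : ∀ j : ℤ, 0 ≤ dep (uT hn2 w v₀ j) := by
      intro j
      obtain ⟨k, hk⟩ := hRay j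
      rw [hk]
      exact Int.natCast_nonneg k
    -- the depth-step identity
    have hstep : ∀ j : ℤ, dep (uT hn2 w v₀ (j - 1)) =
        dep (uT hn2 w v₀ j) + eta (w.getD ((j - 1) % (m : ℤ)).toNat pd) L := by
      intro j
      obtain ⟨k, hk⟩ := hRay j
      have hrec := uT_rec hn2 w hm pd v₀ j
      rw [hk] at hrec
      have hne : lp hn2 (w.getD ((j - 1) % (m : ℤ)).toNat pd) (some (L, k)) ≠ none := by
        rw [← hrec]; exact hc _
      obtain ⟨k', hk', he⟩ := lp_step hn2 _ L k hne
      rw [hrec, hk', hk]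
      simpa [dep] using he
    -- the per-period depth change is constant
    have hDD : ∀ j : ℤ, dep (uT hn2 w v₀ (j - 1 - m)) - dep (uT hn2 w v₀ (j - 1)) =
        dep (uT hn2 w v₀ (j - m)) - dep (uT hn2 w v₀ j) := by
      intro j
      have emodeq : (j - (m : ℤ) - 1) % (m : ℤ) = (j - 1) % (m : ℤ) := by
        rw [show j - (m : ℤ) - 1 = (j - 1) - (m : ℤ) by ring, Int.sub_emod, Int.emod_self,
          sub_zero, Int.emod_emod_of_dvd _ dvd_rfl]
      have h1 := hstep j
      have h2 := hstep (j - (m : ℤ))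
      rw [emodeq] at h2
      rw [show j - 1 - (m : ℤ) = j - (m : ℤ) - 1 by ring]
      omega
    have hDc2 : ∀ N : ℕ,
        (dep (uT hn2 w v₀ ((m : ℤ) - N - m)) - dep (uT hn2 w v₀ ((m : ℤ) - N)) =
          dep (uT hn2 w v₀ 0) - dep (uT hn2 w v₀ (m : ℤ))) ∧
        (dep (uT hn2 w v₀ ((m : ℤ) + N - m)) - dep (uT hn2 w v₀ ((m : ℤ) + N)) =
          dep (uT hn2 w v₀ 0) - dep (uT hn2 w v₀ (m : ℤ))) := by
      intro N
      induction N with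
      | zero => norm_num
      | succ N ih =>
        constructor
        · have h := hDD ((m : ℤ) - N)
          rw [show (m : ℤ) - (N + 1 : ℕ) = (m : ℤ) - N - 1 by push_cast; ring]
          rw [h]
          exact ih.1
        · have h := hDD ((m : ℤ) + N + 1)
          rw [show (m : ℤ) + N + 1 - 1 = (m : ℤ) + N by ring] at h
          rw [show (m : ℤ) + (N + 1 : ℕ) = (m : ℤ) + N + 1 by push_cast; ring]
          rw [← h]
          exact ih.2
    have hDc : ∀ j : ℤ, dep (uT hn2 w v₀ (j - m)) - dep (uT hn2 w v₀ j) =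
        dep (uT hn2 w v₀ 0) - dep (uT hn2 w v₀ (m : ℤ)) := by
      intro j
      rcases le_or_gt j (m : ℤ) with h | h
      · have he : (m : ℤ) - (((m : ℤ) - j).toNat : ℤ) = j := by omega
        rw [← he]; exact (hDc2 ((m : ℤ) - j).toNat).1
      · have he : (m : ℤ) + ((j - (m : ℤ)).toNat : ℤ) = j := by omega
        rw [← he]; exact (hDc2 (j - (m : ℤ)).toNat).2
    -- iterate
    have hit : ∀ s : ℕ, dep (uT hn2 w v₀ ((m : ℤ) - s * m)) =
        dep (uT hn2 w v₀ (m : ℤ)) +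
          s * (dep (uT hn2 w v₀ 0) - dep (uT hn2 w v₀ (m : ℤ))) := by
      intro s
      induction s with
      | zero => norm_num
      | succ s ih =>
        have h := hDc ((m : ℤ) - s * m)
        rw [show (m : ℤ) - (s + 1 : ℕ) * m = (m : ℤ) - s * m - m by push_cast; ring]
        push_cast
        push_cast at ih h
        linarith [h, ih]
    have hit2 : ∀ s : ℕ, dep (uT hn2 w v₀ ((m : ℤ) + s * m)) =
        dep (uT hn2 w v₀ (m : ℤ)) -
          s * (dep (uT hn2 w v₀ 0) - dep (uT hn2 w v₀ (m : ℤ))) := by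
      intro s
      induction s with
      | zero => norm_num
      | succ s ih =>
        have h := hDc ((m : ℤ) + (s + 1 : ℕ) * m)
        rw [show (m : ℤ) + (s + 1 : ℕ) * m - m = (m : ℤ) + s * m by push_cast; ring] at h
        push_cast
        push_cast at ih h
        linarith [h, ih]
    -- the drift must vanish
    have hΔ : dep (uT hn2 w v₀ 0) = dep (uT hn2 w v₀ (m : ℤ)) := by
      set Δ : ℤ := dep (uT hn2 w v₀ 0) - dep (uT hn2 w v₀ (m : ℤ)) with hΔdef
      set D0 : ℤ := dep (uT hn2 w v₀ (m : ℤ)) with hD0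
      rcases lt_trichotomy Δ 0 with h | h | h
      · exfalso
        set s : ℕ := D0.toNat + 1 with hs
        have hts : (D0 : ℤ) + 1 ≤ (s : ℤ) := by omega
        have h1 := hit s
        have h2 := hpos ((m : ℤ) - s * m)
        have h3 : (s : ℤ) * Δ ≤ (s : ℤ) * (-1) :=
          mul_le_mul_of_nonneg_left (by omega) (by positivity)
        rw [h1] at h2
        have hD0' : D0 + (s:ℤ) * Δ = dep (uT hn2 w v₀ (m : ℤ)) + (s:ℤ) * Δ := rfl
        nlinarith
      · omega
      · exfalso
        set s : ℕ := D0.toNat + 1 with hs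
        have hts : (D0 : ℤ) + 1 ≤ (s : ℤ) := by omega
        have h1 := hit2 s
        have h2 := hpos ((m : ℤ) + s * m)
        have h3 : (s : ℤ) * 1 ≤ (s : ℤ) * Δ :=
          mul_le_mul_of_nonneg_left (by omega) (by positivity)
        rw [h1] at h2
        nlinarith
    obtain ⟨a, ha⟩ := hRay 0
    obtain ⟨b, hb⟩ := hRay (m : ℤ)
    have hab : a = b := by
      rw [ha, hb] at hΔ
      simpa [dep] using hΔ
    have : uT hn2 w v₀ 0 = uT hn2 w v₀ (m : ℤ) := by rw [ha, hb, hab]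
    rw [uT_zero hn2 w hm v₀, hvm] at this
    exact this

end StarCenterAux
theorem exists_cyclic_permutation_moving_center (n : ℕ) (hn : 3 ≤ n)
    (w : List (Fin n × Bool))
    (hw : evalWord (fun i : Fin n => shift (by omega : 2 ≤ n) i) w ≠ 1) :
    ∃ x y : List (Fin n × Bool), w = x ++ y ∧
      (evalWord (fun i : Fin n => shift (by omega : 2 ≤ n) i) (y ++ x))
        (none : Option (Fin n × ℕ)) ≠ none := by
  classical
  have hn2 : 2 ≤ n := by omega
  by_contra hcon
  push_neg at hcon
  apply hw
  rcases Nat.eq_zero_or_pos w.length with hm | hm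
  · rw [List.length_eq_zero_iff.mp hm]
    rfl
  · have hrot : ∀ r : ℕ,
        (StarCenterAux.Ap hn2 w r * StarCenterAux.Tk hn2 w r)
          (none : Option (Fin n × ℕ)) = none := by
      intro r
      have h := hcon (w.take r) (w.drop r) (List.take_append_drop r w).symm
      have h' : StarCenterAux.Ew hn2 (w.drop r ++ w.take r) none = none := h
      rw [StarCenterAux.Ew_append] at h'
      exact h'
    apply Equiv.ext
    intro v₀
    have h := StarCenterAux.gfix hn2 w hm hrot v₀
    exact h
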